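/- With the inner product ⟨A,B⟩_J = -Tr(A J⁻¹(B)) on so(n), where J acts on an antisymmetric matrix by dividing its k-th off-diagonals by k, the vector field Ψ ↦ -A(ΨΛΨ⁻¹)Ψ on SO(n,ℝ) is the gradient of the function F(Ψ) = Tr(ΨΛΨ⁻¹N) with N = diag(0,1,...,n-1); equivalently, the first-order variation of F at Ψ₀ in direction ΘΨ₀ (Θ ∈ so(n)) equals Tr(Θ[Ψ₀ΛΨ₀⁻¹, N]) = -⟨Θ, J([Ψ₀ΛΨ₀⁻¹, N])⟩_J, and J([L,N]) = A(L) for every symmetric L. -/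

import Mathlib

open Matrix

/-- The antisymmetrization `A(L) = L₊ - L₋` of a matrix. -/
def antisymmetrize {n : ℕ} (L : Matrix (Fin n) (Fin n) ℝ) : Matrix (Fin n) (Fin n) ℝ :=
  Matrix.of fun i j => if i < j then L i j else if j < i then -(L i j) else 0

/-- The operator `J`, dividing the `k`-th off-diagonals by `k`. -/
noncomputable def Jop {n : ℕ} (M : Matrix (Fin n) (Fin n) ℝ) : Matrix (Fin n) (Fin n) ℝ :=
  Matrix.of fun i j => if i = j then 0 else M i j / |(i : ℝ) - (j : ℝ)|

/-- The inverse operator `J⁻¹`, multiplying the `k`-th off-diagonals by `k`. -/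
noncomputable def Jinv {n : ℕ} (M : Matrix (Fin n) (Fin n) ℝ) : Matrix (Fin n) (Fin n) ℝ :=
  Matrix.of fun i j => |(i : ℝ) - (j : ℝ)| * M i j

/-- The inner product `⟨A,B⟩_J = -Tr(A · J⁻¹(B))` on `so(n)`. -/
noncomputable def innerJ {n : ℕ} (A B : Matrix (Fin n) (Fin n) ℝ) : ℝ :=
  -Matrix.trace (A * Jinv B)

attribute [local instance] Matrix.linftyOpNormedRing Matrix.linftyOpNormedAlgebra

/-- With the metric `⟨·,·⟩_J` on `so(n)`, the Toda vector field `Ψ ↦ -A(ΨΛΨ⁻¹)Ψ` is the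
gradient of `F(Ψ) = Tr(ΨΛΨ⁻¹N)`, `N = diag(0,1,…,n-1)`: the first-order variation of `F`
at `Ψ₀` in the direction `ΘΨ₀` equals `Tr(Θ[Ψ₀ΛΨ₀⁻¹, N]) = -⟨Θ, J([Ψ₀ΛΨ₀⁻¹, N])⟩_J`, and
`J([L, N]) = A(L)` for every symmetric `L`. -/
theorem toda_is_gradient_flow {n : ℕ} (Lam : Matrix (Fin n) (Fin n) ℝ) (hLam : Lam.IsDiag)
    (Ψ₀ : Matrix (Fin n) (Fin n) ℝ) (horth : Ψ₀ * Ψ₀ᵀ = 1)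
    (Θ : Matrix (Fin n) (Fin n) ℝ) (hΘ : Θᵀ = -Θ)
    (Nmat : Matrix (Fin n) (Fin n) ℝ) (hN : Nmat = Matrix.diagonal fun i : Fin n => (i : ℝ)) :
    HasDerivAt
      (fun t : ℝ => Matrix.trace
        ((((1 : Matrix (Fin n) (Fin n) ℝ) + t • Θ) * Ψ₀) * Lam
          * ((((1 : Matrix (Fin n) (Fin n) ℝ) + t • Θ) * Ψ₀))⁻¹ * Nmat))
      (Matrix.trace (Θ * ((Ψ₀ * Lam * Ψ₀ᵀ) * Nmat - Nmat * (Ψ₀ * Lam * Ψ₀ᵀ)))) 0 ∧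
    Matrix.trace (Θ * ((Ψ₀ * Lam * Ψ₀ᵀ) * Nmat - Nmat * (Ψ₀ * Lam * Ψ₀ᵀ)))
      = -innerJ Θ (Jop ((Ψ₀ * Lam * Ψ₀ᵀ) * Nmat - Nmat * (Ψ₀ * Lam * Ψ₀ᵀ))) ∧
    (∀ L : Matrix (Fin n) (Fin n) ℝ, Lᵀ = L →
      Jop (L * Nmat - Nmat * L) = antisymmetrize L) := by
  haveI : CompleteSpace (Matrix (Fin n) (Fin n) ℝ) := FiniteDimensional.complete ℝ _
  set Q : Matrix (Fin n) (Fin n) ℝ := Ψ₀ * Lam * Ψ₀ᵀ with hQ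
  refine ⟨?_, ?_, ?_⟩
  · -- Part 1: the derivative
    have hdet : IsUnit Ψ₀.det := by
      apply IsUnit.of_mul_eq_one Ψ₀ᵀ.det
      rw [← Matrix.det_mul, horth, Matrix.det_one]
    obtain ⟨u, hu⟩ := (Matrix.isUnit_iff_isUnit_det _).mpr hdet
    have hinv : Ψ₀⁻¹ = (↑u⁻¹ : Matrix (Fin n) (Fin n) ℝ) := by
      rw [Matrix.nonsing_inv_eq_ringInverse, ← hu, Ring.inverse_unit]
    have hinvT : Ψ₀⁻¹ = Ψ₀ᵀ := Matrix.inv_eq_right_inv horth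
    have h1 : HasDerivAt (fun t : ℝ => (1 + t • Θ) * Ψ₀) (Θ * Ψ₀) 0 := by
      have he : (fun t : ℝ => (1 + t • Θ) * Ψ₀) = fun t : ℝ => Ψ₀ + t • (Θ * Ψ₀) := by
        funext t; simp [add_mul, Matrix.smul_mul]
      rw [he]
      have := ((hasDerivAt_id (0:ℝ)).smul_const (Θ * Ψ₀)).const_add Ψ₀
      simp only [one_smul] at this; exact this
    have h2 := hasFDerivAt_ringInverse (𝕜 := ℝ) u
    rw [hu, show Ψ₀ = (1 + (0:ℝ) • Θ) * Ψ₀ by simp] at h2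
    have hI : HasDerivAt (fun t : ℝ => Ring.inverse ((1 + t • Θ) * Ψ₀))
        (-(Ψ₀⁻¹ * (Θ * Ψ₀) * Ψ₀⁻¹)) 0 := by
      have h3 := h2.comp_hasDerivAt 0 h1
      have e : -(Ψ₀⁻¹ * (Θ * Ψ₀) * Ψ₀⁻¹) = (-((ContinuousLinearMap.mulLeftRight ℝ
          (Matrix (Fin n) (Fin n) ℝ)) ↑u⁻¹) ↑u⁻¹) (Θ * Ψ₀) := by
        rw [hinv]
        simp [ContinuousLinearMap.mulLeftRight_apply, mul_assoc]
      rw [e]; exact h3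
    have hprod : HasDerivAt
        (fun t : ℝ => ((1 + t • Θ) * Ψ₀) * Lam * Ring.inverse ((1 + t • Θ) * Ψ₀) * Nmat)
        (((Θ * Ψ₀ * Lam) * Ring.inverse Ψ₀
          + (Ψ₀ * Lam) * (-(Ψ₀⁻¹ * (Θ * Ψ₀) * Ψ₀⁻¹))) * Nmat) 0 := by
      have := (((h1.mul_const Lam).mul hI).mul_const Nmat)
      simp only [zero_smul, add_zero, one_mul] at this; exact this
    set D : Matrix (Fin n) (Fin n) ℝ :=
      ((Θ * Ψ₀ * Lam) * Ring.inverse Ψ₀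
        + (Ψ₀ * Lam) * (-(Ψ₀⁻¹ * (Θ * Ψ₀) * Ψ₀⁻¹))) * Nmat with hD
    have htr : HasDerivAt
        (fun t : ℝ => Matrix.trace
          (((1 + t • Θ) * Ψ₀) * Lam * Ring.inverse ((1 + t • Θ) * Ψ₀) * Nmat))
        (Matrix.trace D) 0 := by
      exact ((LinearMap.toContinuousLinearMap
        (Matrix.traceLinearMap (Fin n) ℝ ℝ)).hasFDerivAt.comp_hasDerivAt 0 hprod)
    have hfun : (fun t : ℝ => Matrix.trace
          ((((1:Matrix (Fin n) (Fin n) ℝ) + t • Θ) * Ψ₀) * Lam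
            * ((((1:Matrix (Fin n) (Fin n) ℝ) + t • Θ) * Ψ₀))⁻¹ * Nmat))
        = (fun t : ℝ => Matrix.trace
          (((1 + t • Θ) * Ψ₀) * Lam * Ring.inverse ((1 + t • Θ) * Ψ₀) * Nmat)) := by
      funext t; rw [Matrix.nonsing_inv_eq_ringInverse]
    rw [hfun]
    convert htr using 1
    -- trace D = trace (Θ * (Q * Nmat - Nmat * Q))
    rw [hD, ← Matrix.nonsing_inv_eq_ringInverse, hinvT]
    have hmul : Ψ₀ᵀ * Θ * Ψ₀ * Ψ₀ᵀ = Ψ₀ᵀ * Θ := by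
      rw [mul_assoc, mul_assoc, horth, mul_one]
    rw [Matrix.mul_sub, Matrix.trace_sub, Matrix.add_mul, Matrix.trace_add]
    have e0 : Θ * (Q * Nmat) = Θ * Ψ₀ * Lam * Ψ₀ᵀ * Nmat := by rw [hQ]; noncomm_ring
    have e1 : Ψ₀ * Lam * -(Ψ₀ᵀ * (Θ * Ψ₀) * Ψ₀ᵀ) * Nmat = -(Q * (Θ * Nmat)) := by
      have h' : Ψ₀ᵀ * (Θ * Ψ₀) * Ψ₀ᵀ = Ψ₀ᵀ * Θ := by rw [← mul_assoc]; exact hmul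
      rw [h', hQ]; noncomm_ring
    have t0 : (Θ * (Q * Nmat)).trace = (Θ * Ψ₀ * Lam * Ψ₀ᵀ * Nmat).trace := by rw [e0]
    have t1 : (Ψ₀ * Lam * -(Ψ₀ᵀ * (Θ * Ψ₀) * Ψ₀ᵀ) * Nmat).trace
        = -(Θ * (Nmat * Q)).trace := by
      rw [e1, Matrix.trace_neg, Matrix.trace_mul_comm Q (Θ * Nmat), mul_assoc]
    linarith
  · -- Part 2
    set M : Matrix (Fin n) (Fin n) ℝ := Q * Nmat - Nmat * Q with hM
    have key : Jinv (Jop M) = M := by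
      ext i j
      by_cases h : i = j
      · subst h
        simp [Jinv, Jop, hM, hN, Matrix.mul_diagonal, Matrix.diagonal_mul,
          Matrix.sub_apply, mul_comm]
      · have : |(i : ℝ) - (j : ℝ)| ≠ 0 := by
          rw [abs_ne_zero, sub_ne_zero]
          exact_mod_cast fun hc => h (Fin.ext (by exact_mod_cast hc))
        simp only [Jinv, Jop, Matrix.of_apply, if_neg h]
        field_simp
    rw [innerJ, key, neg_neg]
  · -- Part 3
    intro L hL
    ext i j
    simp only [Jop, antisymmetrize, Matrix.of_apply, Matrix.sub_apply, hN,
      Matrix.mul_diagonal, Matrix.diagonal_mul]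
    rcases lt_trichotomy i j with h | h | h
    · have hij : (i : ℝ) < (j : ℝ) := by exact_mod_cast h
      rw [if_neg (ne_of_lt h), if_pos h, abs_of_neg (by linarith), neg_sub]
      have : (j : ℝ) - i ≠ 0 := by linarith
      field_simp
    · subst h
      simp
    · have hij : (j : ℝ) < (i : ℝ) := by exact_mod_cast h
      rw [if_neg (ne_of_gt h), if_neg (not_lt.mpr h.le), if_pos h,
        abs_of_pos (by linarith : (0:ℝ) < (i:ℝ) - j)]
      have : (i : ℝ) - j ≠ 0 := by linarith
      field_simp
      ring
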